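/- Let p be a prime, G a finite p-group, and R a group of operators for G. Then G is R-nilpotent if and only if Aut_R(G), the image of R in Aut G, is a p-group. -/

import Mathlib

/-- `opK φ n = Kₙ(G, R)`: `K₀ = G`, `Kₙ₊₁ = [Kₙ, R]` is generated by the `[x, r] = x⁻¹ · x^r`,
`x ∈ Kₙ(G, R)`, `r ∈ R`. -/
def opK {R G : Type*} [Group R] [Group G] (φ : R →* MulAut G) : ℕ → Subgroup G
  | 0 => ⊤
  | n + 1 => Subgroup.closure {y | ∃ x ∈ opK φ n, ∃ r : R, y = x⁻¹ * φ r x}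

/-- If an automorphism in the image of `φ` has order prime to `p` (witnessed by `β ^ m = 1`,
`p ∤ m`) and the operator series terminates, then it is trivial. -/
lemma opK_stab_fix {R G : Type*} [Group R] [Group G] {p : ℕ} (hp : p.Prime)
    (hG : IsPGroup p G) (φ : R →* MulAut G) (s : R) {m N : ℕ} (hm : ¬ p ∣ m)
    (hpow : (φ s) ^ m = 1) (hN : opK φ N = ⊥) : ∀ x : G, φ s x = x := by
  have step : ∀ n : ℕ, (∀ x ∈ opK φ (n + 1), φ s x = x) →
      ∀ x ∈ opK φ n, φ s x = x := by
    intro n h1 x hx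
    set c : G := x⁻¹ * φ s x with hc_def
    have hc : c ∈ opK φ (n + 1) := Subgroup.subset_closure ⟨x, hx, s, rfl⟩
    have hfix : φ s c = c := h1 c hc
    have hfixj : ∀ j : ℕ, ((φ s) ^ j : MulAut G) c = c := by
      intro j
      induction j with
      | zero => rfl
      | succ j ih => rw [pow_succ', MulAut.mul_apply, ih, hfix]
    have key : ∀ j : ℕ, ((φ s) ^ j : MulAut G) x = x * c ^ j := by
      intro j
      induction j with
      | zero => simp
      | succ j ih =>
        have hx1 : φ s x = x * c := by rw [hc_def, mul_inv_cancel_left]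
        rw [pow_succ, MulAut.mul_apply, hx1, map_mul, ih, hfixj j, pow_succ, mul_assoc]
    have hcm : c ^ m = 1 := by
      have := key m
      rw [hpow] at this
      simpa using this.symm
    have hco : orderOf c ∣ m := orderOf_dvd_of_pow_eq_one hcm
    obtain ⟨k, hk⟩ := hG c
    have hck : orderOf c ∣ p ^ k := orderOf_dvd_of_pow_eq_one hk
    obtain ⟨i, hi, hieq⟩ := (Nat.dvd_prime_pow hp).mp hck
    have hc1 : c = 1 := by
      rcases Nat.eq_zero_or_pos i with hi0 | hipos
      · exact orderOf_eq_one_iff.mp (by rw [hieq, hi0, pow_zero])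
      · exact absurd (dvd_trans (dvd_pow_self p hipos.ne') (hieq ▸ hco)) hm
    have hx1 : φ s x = x * c := by rw [hc_def, mul_inv_cancel_left]
    rw [hx1, hc1, mul_one]
  have key : ∀ j : ℕ, j ≤ N → ∀ x ∈ opK φ (N - j), φ s x = x := by
    intro j
    induction j with
    | zero =>
      intro _ x hx
      rw [Nat.sub_zero, hN, Subgroup.mem_bot] at hx
      rw [hx, map_one]
    | succ j ih =>
      intro hj x hx
      have h1 : N - j = (N - (j + 1)) + 1 := by omega
      exact step _ (fun y hy => ih (le_of_lt hj) y (h1 ▸ hy)) x hx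
  intro x
  simpa using key N le_rfl x (by rw [Nat.sub_self]; exact Subgroup.mem_top x)

/-- A finite `p`-group `G` with operator group `R` (acting via `φ : R →* Aut G`) is
`R`-nilpotent iff `Aut_R G`, the image of `R` in `Aut G`, is a `p`-group. -/
theorem pGroup_opNilpotent_iff_image_pGroup (p : ℕ) (hp : p.Prime) (R G : Type*) [Group R]
    [Group G] [Finite R] [Finite G] (hG : IsPGroup p G) (φ : R →* MulAut G) :
    (∃ n : ℕ, opK φ n = ⊥) ↔ IsPGroup p φ.range := by
  haveI : Fact p.Prime := ⟨hp⟩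
  constructor
  · rintro ⟨N, hN⟩ ⟨g, hg⟩
    obtain ⟨r, hr⟩ := hg
    have hn0 : orderOf (φ r) ≠ 0 := by
      have : orderOf (φ r) ∣ orderOf r := orderOf_map_dvd φ r
      have hr0 : orderOf r ≠ 0 := (orderOf_pos r).ne'
      exact fun h => hr0 (Nat.eq_zero_of_zero_dvd (h ▸ this))
    set n := orderOf (φ r) with hn_def
    set k := n.factorization p with hk_def
    set m := n / p ^ k with hm_def
    have hm : ¬ p ∣ m := Nat.not_dvd_ordCompl hp hn0
    refine ⟨k, ?_⟩
    have hmul : p ^ k * m = n := Nat.ordProj_mul_ordCompl_eq_self n p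
    have hβ : (φ (r ^ p ^ k)) ^ m = 1 := by
      rw [map_pow, ← pow_mul, hmul]
      exact pow_orderOf_eq_one (φ r)
    have hfix := opK_stab_fix hp hG φ (r ^ p ^ k) hm hβ hN
    have h1 : (φ r) ^ p ^ k = 1 := by
      rw [← map_pow]
      exact MulEquiv.ext hfix
    exact Subtype.ext (by
      simp only [SubmonoidClass.coe_pow, OneMemClass.coe_one]
      rw [← hr, h1])
  · intro hA
    set A := φ.range with hA_def
    set ψ : A →* MulAut G := A.subtype with hψ_def
    set P := G ⋊[ψ] A with hP_def
    haveI : Finite P := by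
      apply Finite.of_injective (fun g : P => (g.left, g.right))
      intro a b h
      simp only [Prod.mk.injEq] at h
      exact SemidirectProduct.ext h.1 h.2
    have hPp : IsPGroup p P := by
      intro g
      obtain ⟨k, hk⟩ := hA (SemidirectProduct.rightHom g)
      have : g ^ p ^ k ∈ (SemidirectProduct.inl : G →* P).range := by
        rw [SemidirectProduct.range_inl_eq_ker_rightHom, MonoidHom.mem_ker, map_pow]
        exact hk
      obtain ⟨y, hy⟩ := this
      obtain ⟨j, hj⟩ := hG y
      exact ⟨k + j, by rw [pow_add, pow_mul, ← hy, ← map_pow, hj, map_one]⟩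
    haveI : Group.IsNilpotent P := hPp.isNilpotent
    set N := Group.nilpotencyClass P with hN_def
    have hbot : (⊤ : Subgroup P).lowerCentralSeries N = ⊥ := lowerCentralSeries_nilpotencyClass
    have hle : ∀ n : ℕ, opK φ n ≤ ((⊤ : Subgroup P).lowerCentralSeries n).comap
        (SemidirectProduct.inl : G →* P) := by
      intro n
      induction n with
      | zero =>
        intro x _
        exact Subgroup.mem_top _
      | succ n ih =>
        rw [opK]
        apply Subgroup.closure_le _ |>.mpr
        rintro y ⟨x, hx, r, rfl⟩
        have ha : φ r ∈ A := ⟨r, rfl⟩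
        set a : A := ⟨φ r, ha⟩ with ha_def
        open scoped commutatorElement in
        have hcomm : (SemidirectProduct.inl (x⁻¹ * φ r x) : P)
            = ⁅(SemidirectProduct.inl x : P)⁻¹, SemidirectProduct.inr a⁆ := by
          rw [commutatorElement_def]
          have : (SemidirectProduct.inl (φ r x) : P)
              = SemidirectProduct.inr a * SemidirectProduct.inl x
                * (SemidirectProduct.inr a)⁻¹ := by
            have := SemidirectProduct.inl_aut (φ := ψ) a x
            rw [map_inv] at this
            exact this
          rw [map_mul, map_inv, this]
          group
        show SemidirectProduct.inl (x⁻¹ * φ r x) ∈ (⊤ : Subgroup P).lowerCentralSeries (n + 1)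
        rw [hcomm, lowerCentralSeries_succ]
        exact Subgroup.commutator_mem_commutator (Subgroup.inv_mem _ (ih hx))
          (Subgroup.mem_top _)
    refine ⟨N, le_bot_iff.mp ?_⟩
    intro x hx
    have := hle N hx
    rw [Subgroup.mem_comap, hbot, Subgroup.mem_bot] at this
    rw [Subgroup.mem_bot]
    exact SemidirectProduct.inl_injective (by rw [this, map_one])
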